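/- For all real x and y, |(x - tanh x) - (y - tanh y)| ≤ (x^2 + y^2) · |x - y|. -/

import Mathlib

lemma hasDerivAt_tanh' (t : ℝ) :
    HasDerivAt Real.tanh (1 / Real.cosh t ^ 2) t := by
  have hc : Real.cosh t ≠ 0 := (Real.cosh_pos t).ne'
  have h := (Real.hasDerivAt_sinh t).div (Real.hasDerivAt_cosh t) hc
  have heq : (Real.cosh t * Real.cosh t - Real.sinh t * Real.sinh t) / Real.cosh t ^ 2
      = 1 / Real.cosh t ^ 2 := by
    rw [show Real.cosh t * Real.cosh t - Real.sinh t * Real.sinh t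
      = Real.cosh t ^ 2 - Real.sinh t ^ 2 by ring, Real.cosh_sq_sub_sinh_sq]
  rw [heq] at h
  have : (fun x => Real.sinh x / Real.cosh x) = Real.tanh := by
    funext x; rw [Real.tanh_eq_sinh_div_cosh]
  rwa [show (Real.sinh / Real.cosh) = Real.tanh from this] at h

lemma abs_tanh_le_abs (t : ℝ) : |Real.tanh t| ≤ |t| := by
  have h := Convex.norm_image_sub_le_of_norm_hasDerivWithin_le
    (f := Real.tanh) (f' := fun u => 1 / Real.cosh u ^ 2) (s := Set.univ) (C := 1)
    (fun u _ => (hasDerivAt_tanh' u).hasDerivWithinAt)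
    (fun u _ => by
      rw [Real.norm_eq_abs, abs_of_nonneg (by positivity)]
      rw [div_le_one (by positivity)]
      nlinarith [Real.one_le_cosh u])
    convex_univ (Set.mem_univ 0) (Set.mem_univ t)
  simpa [Real.norm_eq_abs, Real.tanh_zero] using h

theorem abs_sub_tanh_lipschitz_quadratic (x y : ℝ) :
    |(x - Real.tanh x) - (y - Real.tanh y)| ≤ (x ^ 2 + y ^ 2) * |x - y| := by
  have key : ∀ c ∈ Set.uIcc y x, Real.tanh c ^ 2 ≤ x ^ 2 + y ^ 2 := by
    intro c hc
    have h1 : Real.tanh c ^ 2 ≤ c ^ 2 := by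
      have := abs_tanh_le_abs c
      nlinarith [abs_nonneg (Real.tanh c), abs_nonneg c, sq_abs (Real.tanh c), sq_abs c]
    have h2 : c ^ 2 ≤ x ^ 2 + y ^ 2 := by
      rcases Set.mem_uIcc.1 hc with ⟨h, h'⟩ | ⟨h, h'⟩ <;>
        nlinarith [mul_nonneg (sub_nonneg.2 h) (sub_nonneg.2 h'), sq_nonneg (x + y), sq_nonneg c]
    linarith
  have hderiv : ∀ c : ℝ, HasDerivAt (fun u => u - Real.tanh u) (Real.tanh c ^ 2) c := by
    intro c
    have h := (hasDerivAt_id c).sub (hasDerivAt_tanh' c)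
    have : 1 - 1 / Real.cosh c ^ 2 = Real.tanh c ^ 2 := by
      have hc : Real.cosh c ≠ 0 := (Real.cosh_pos c).ne'
      rw [Real.tanh_eq_sinh_div_cosh, div_pow]
      field_simp
      nlinarith [Real.cosh_sq_sub_sinh_sq c]
    rwa [this] at h
  have h := Convex.norm_image_sub_le_of_norm_hasDerivWithin_le
    (f := fun u => u - Real.tanh u) (f' := fun u => Real.tanh u ^ 2)
    (s := Set.uIcc y x) (C := x ^ 2 + y ^ 2)
    (fun c hc => (hderiv c).hasDerivWithinAt)
    (fun c hc => by
      rw [Real.norm_eq_abs, abs_of_nonneg (sq_nonneg _)]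
      exact key c hc)
    (convex_uIcc y x) Set.right_mem_uIcc Set.left_mem_uIcc
  rw [abs_sub_comm, abs_sub_comm x y]
  simpa [Real.norm_eq_abs] using h
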